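/- The n-variable majority function Maj_n has algebraic immunity exactly ⌈n/2⌉, the maximum possible value. -/
import Mathlib

abbrev BF (n : ℕ) := (Fin n → ZMod 2) → ZMod 2

/-- Hamming weight of a vector in `F₂ⁿ`. -/
def wtv {n : ℕ} (x : Fin n → ZMod 2) : ℕ :=
  (Finset.univ.filter fun i => x i = 1).card

/-- ANF coefficient `a_α = ⊕_{z ≤ α} f(z)`. -/
def anf {n : ℕ} (f : BF n) (α : Fin n → ZMod 2) : ZMod 2 :=
  ∑ z ∈ Finset.univ.filter (fun z : Fin n → ZMod 2 => ∀ i, z i = 1 → α i = 1), f z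

/-- Algebraic degree: the maximum weight of `α` with nonzero ANF coefficient
(0 for the zero function). -/
def degBF {n : ℕ} (f : BF n) : ℕ :=
  (Finset.univ.filter fun α => anf f α ≠ 0).sup wtv

/-- Algebraic immunity: minimum degree of a nonzero annihilator of `f` or of `1 ⊕ f`. -/
noncomputable def AI {n : ℕ} (f : BF n) : ℕ :=
  sInf {d : ℕ | ∃ g : BF n, g ≠ 0 ∧ degBF g = d ∧
    ((∀ x, g x * f x = 0) ∨ (∀ x, g x * (1 + f x) = 0))}

/-- The n-variable majority function: 1 iff the weight exceeds ⌊n/2⌋. -/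
def majF (n : ℕ) : BF n := fun x => if n / 2 < wtv x then 1 else 0

namespace AIM
variable {n : ℕ}

lemma zmod2_cases (a : ZMod 2) : a = 0 ∨ a = 1 := by revert a; decide

lemma zmod2_mul_eq_one {a b : ZMod 2} : a * b = 1 ↔ a = 1 ∧ b = 1 := by revert a b; decide

/-- The Möbius-type transform (same formula as `anf`). -/
def A (c : BF n) : BF n := fun x =>
  ∑ α ∈ Finset.univ.filter (fun α : Fin n → ZMod 2 => ∀ i, α i = 1 → x i = 1), c α

lemma anf_eq_A (f : BF n) : anf f = A f := rfl

lemma card_factor (a b : ZMod 2) :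
    ((Fintype.card {t : ZMod 2 // (a = 1 → t = 1) ∧ (t = 1 → b = 1)} : ℕ) : ZMod 2)
      = if a = b then 1 else 0 := by revert a b; decide

lemma cardC0 (α β : Fin n → ZMod 2) :
    (((Finset.univ.filter (fun z : Fin n → ZMod 2 =>
        (∀ i, α i = 1 → z i = 1) ∧ (∀ i, z i = 1 → β i = 1))).card : ℕ) : ZMod 2)
      = if α = β then 1 else 0 := by
  have h1 : (Finset.univ.filter (fun z : Fin n → ZMod 2 =>
        (∀ i, α i = 1 → z i = 1) ∧ (∀ i, z i = 1 → β i = 1))).card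
      = Fintype.card {z : Fin n → ZMod 2 //
          ∀ i, (α i = 1 → z i = 1) ∧ (z i = 1 → β i = 1)} := by
    rw [Fintype.card_subtype]
    congr 1
    apply Finset.filter_congr
    intro z _
    constructor
    · rintro ⟨h1, h2⟩ i; exact ⟨h1 i, h2 i⟩
    · intro h; exact ⟨fun i => (h i).1, fun i => (h i).2⟩
  rw [h1]
  rw [Fintype.card_congr (Equiv.subtypePiEquivPi (p := fun i (t : ZMod 2) =>
    (α i = 1 → t = 1) ∧ (t = 1 → β i = 1)))]
  rw [Fintype.card_pi]
  push_cast
  rw [show (if α = β then (1:ZMod 2) else 0) = ∏ i : Fin n, (if α i = β i then 1 else 0) by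
    by_cases h : α = β
    · subst h; simp
    · rw [if_neg h]
      obtain ⟨i, hi⟩ := Function.ne_iff.mp h
      exact (Finset.prod_eq_zero (Finset.mem_univ i)
        (if_neg hi : (if α i = β i then (1:ZMod 2) else 0) = 0)).symm]
  exact Finset.prod_congr rfl fun i _ => card_factor (α i) (β i)

lemma A_apply (c : BF n) (x : Fin n → ZMod 2) :
    A c x = ∑ α : Fin n → ZMod 2,
      (if (∀ i, α i = 1 → x i = 1) then (1 : ZMod 2) else 0) * c α := by
  rw [A, Finset.sum_filter]
  exact Finset.sum_congr rfl fun α _ => by by_cases h : ∀ i, α i = 1 → x i = 1 <;> simp [h]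

lemma A_A (c : BF n) : A (A c) = c := by
  funext β
  rw [A_apply]
  simp_rw [A_apply, Finset.mul_sum]
  rw [Finset.sum_comm]
  have key : ∀ α : Fin n → ZMod 2,
      (∑ z : Fin n → ZMod 2, (if (∀ i, z i = 1 → β i = 1) then (1:ZMod 2) else 0) *
        ((if (∀ i, α i = 1 → z i = 1) then (1:ZMod 2) else 0) * c α))
      = (if α = β then 1 else 0) * c α := by
    intro α
    simp_rw [← mul_assoc]
    rw [← Finset.sum_mul]
    congr 1
    rw [← cardC0 α β, ← Finset.sum_boole]
    apply Finset.sum_congr rfl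
    intro z _
    rw [mul_comm, ite_zero_mul_ite_zero, mul_one]
  rw [Finset.sum_congr rfl (fun α _ => key α)]
  simp

lemma A_anf (f : BF n) : A (anf f) = f := by rw [anf_eq_A, A_A]

lemma anf_A (c : BF n) : anf (A c) = c := by rw [anf_eq_A, A_A]

lemma wtv_le_degBF {f : BF n} {α : Fin n → ZMod 2} (h : anf f α ≠ 0) : wtv α ≤ degBF f :=
  Finset.le_sup (Finset.mem_filter.mpr ⟨Finset.mem_univ _, h⟩)

lemma wtv_mono {x y : Fin n → ZMod 2} (h : ∀ i, x i = 1 → y i = 1) : wtv x ≤ wtv y :=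
  Finset.card_le_card (fun i hi => by
    simp only [Finset.mem_filter, Finset.mem_univ, true_and] at *
    exact h i hi)

lemma degBF_le {f : BF n} {d : ℕ} (h : ∀ α, anf f α ≠ 0 → wtv α ≤ d) : degBF f ≤ d :=
  Finset.sup_le fun α hα => h α (Finset.mem_filter.mp hα).2

/-- A nonzero function vanishing on all points of weight ≤ k has degree ≥ k+1. -/
lemma vanish_low {g : BF n} {k : ℕ} (h0 : ∀ x, wtv x ≤ k → g x = 0) (hg : g ≠ 0) :
    k + 1 ≤ degBF g := by
  by_contra h
  push_neg at h
  have hd : degBF g ≤ k := Nat.lt_succ_iff.mp h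
  apply hg
  have hanf : anf g = 0 := by
    funext α
    by_cases hα : wtv α ≤ k
    · rw [anf]
      apply Finset.sum_eq_zero
      intro z hz
      have hz' := (Finset.mem_filter.mp hz).2
      exact h0 z (le_trans (wtv_mono hz') hα)
    · by_contra hne
      exact hα (le_trans (wtv_le_degBF hne) hd)
  have h2 := A_anf g
  rw [hanf] at h2
  rw [← h2]
  funext x
  simp [A]

def compl (x : Fin n → ZMod 2) : Fin n → ZMod 2 := fun i => x i + 1

lemma compl_compl (x : Fin n → ZMod 2) : compl (compl x) = x := by
  funext i
  show x i + 1 + 1 = x i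
  rcases zmod2_cases (x i) with h | h <;> rw [h] <;> decide

/-- key computation : A c at complement equals A c' where c' β = ∑_{α ⊇ β} c α -/
lemma A_compl (c : BF n) (x : Fin n → ZMod 2) :
    A c (compl x)
      = A (fun β => ∑ α ∈ Finset.univ.filter
          (fun α : Fin n → ZMod 2 => ∀ i, β i = 1 → α i = 1), c α) x := by
  rw [A_apply, A_apply]
  have key : ∀ β : Fin n → ZMod 2,
      (if (∀ i, β i = 1 → x i = 1) then (1:ZMod 2) else 0) *
        (∑ α ∈ Finset.univ.filter
          (fun α : Fin n → ZMod 2 => ∀ i, β i = 1 → α i = 1), c α)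
      = ∑ α : Fin n → ZMod 2,
          (if ((∀ i, β i = 1 → x i = 1) ∧ (∀ i, β i = 1 → α i = 1)) then (1:ZMod 2) else 0)
            * c α := by
    intro β
    rw [Finset.sum_filter, Finset.mul_sum]
    apply Finset.sum_congr rfl
    intro α _
    rw [boole_mul, ← ite_and, ← boole_mul]
  rw [Finset.sum_congr rfl (fun β _ => key β), Finset.sum_comm]
  apply Finset.sum_congr rfl
  intro α _
  rw [← Finset.sum_mul]
  congr 1
  have hm : ∀ β : Fin n → ZMod 2,
      ((∀ i, β i = 1 → x i = 1) ∧ (∀ i, β i = 1 → α i = 1))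
        ↔ ((∀ i, (0:Fin n → ZMod 2) i = 1 → β i = 1) ∧
           (∀ i, β i = 1 → x i * α i = 1)) := by
    intro β
    constructor
    · rintro ⟨h1, h2⟩
      refine ⟨fun i hi => ?_, fun i hi => ?_⟩
      · rw [Pi.zero_apply] at hi; exact absurd hi (by decide)
      · exact zmod2_mul_eq_one.mpr ⟨h1 i hi, h2 i hi⟩
    · rintro ⟨-, h2⟩
      exact ⟨fun i hi => (zmod2_mul_eq_one.mp (h2 i hi)).1,
             fun i hi => (zmod2_mul_eq_one.mp (h2 i hi)).2⟩
  rw [Finset.sum_congr rfl (fun β _ => by rw [if_congr (hm β) rfl rfl])]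
  have hc : ∀ β : Fin n → ZMod 2,
      ((∀ i, (0:Fin n → ZMod 2) i = 1 → β i = 1) ∧ (∀ i, β i = 1 → x i * α i = 1))
        ↔ ((∀ i, (0:Fin n → ZMod 2) i = 1 → β i = 1) ∧
           (∀ i, β i = 1 → (fun i => x i * α i) i = 1)) := fun β => Iff.rfl
  rw [Finset.sum_congr rfl (fun β _ => by rw [if_congr (hc β) rfl rfl])]
  rw [Finset.sum_boole, cardC0]
  have hiff : (∀ i, α i = 1 → compl x i = 1)
      ↔ ((0 : Fin n → ZMod 2) = fun i => x i * α i) := by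
    constructor
    · intro h
      funext i
      rw [Pi.zero_apply]
      rcases zmod2_cases (α i) with ha | ha
      · rw [ha, mul_zero]
      · have h1 := h i ha
        have hx : x i = 0 := by
          rcases zmod2_cases (x i) with hx | hx
          · exact hx
          · exfalso
            have h3 : x i + 1 = 1 := h1
            rw [hx] at h3
            exact absurd h3 (by decide)
        rw [hx, zero_mul]
    · intro h i hi
      have h1 := congrFun h i
      rw [Pi.zero_apply, hi, mul_one] at h1
      show x i + 1 = 1
      rw [← h1, zero_add]
  rw [if_congr hiff rfl rfl]

lemma deg_comp_compl (g : BF n) : degBF (fun x => g (compl x)) ≤ degBF g := by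
  have hrep : (fun x => g (compl x))
      = A (fun β => ∑ α ∈ Finset.univ.filter
          (fun α : Fin n → ZMod 2 => ∀ i, β i = 1 → α i = 1), anf g α) := by
    funext x
    conv_lhs => rw [show g = A (anf g) from (A_anf g).symm]
    exact A_compl (anf g) x
  apply degBF_le
  intro β hβ
  rw [hrep, anf_A] at hβ
  have hex : ∃ α ∈ Finset.univ.filter
      (fun α : Fin n → ZMod 2 => ∀ i, β i = 1 → α i = 1), anf g α ≠ 0 := by
    by_contra hcon
    push_neg at hcon
    exact hβ (Finset.sum_eq_zero hcon)
  obtain ⟨α, hα, hne⟩ := hex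
  exact le_trans (wtv_mono (Finset.mem_filter.mp hα).2) (wtv_le_degBF hne)

/-- Linear algebra: if #S < #{α : wtv α ≤ d} there is a nonzero function of degree ≤ d
vanishing on S. -/
lemma exists_annih (S : Finset (Fin n → ZMod 2)) (d : ℕ)
    (hcard : S.card < (Finset.univ.filter fun α : Fin n → ZMod 2 => wtv α ≤ d).card) :
    ∃ g : BF n, g ≠ 0 ∧ degBF g ≤ d ∧ ∀ x ∈ S, g x = 0 := by
  classical
  set T := Finset.univ.filter fun α : Fin n → ZMod 2 => wtv α ≤ d with hT
  let M : Matrix ↥S ↥T (ZMod 2) := fun s α =>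
    if (∀ i, (α : Fin n → ZMod 2) i = 1 → (s : Fin n → ZMod 2) i = 1) then 1 else 0
  have hni : ¬ Function.Injective M.mulVecLin := by
    intro hinj
    have h1 := LinearMap.finrank_le_finrank_of_injective hinj
    rw [Module.finrank_fintype_fun_eq_card, Module.finrank_fintype_fun_eq_card,
      Fintype.card_coe, Fintype.card_coe] at h1
    omega
  rw [Function.not_injective_iff] at hni
  obtain ⟨u, v, huv, hne⟩ := hni
  set h : ↥T → ZMod 2 := u - v with hh
  have hh0 : h ≠ 0 := sub_ne_zero_of_ne hne
  have hker : M.mulVec h = 0 := by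
    have h2 : M.mulVecLin h = 0 := by
      rw [hh, map_sub, huv, sub_self]
    simpa [Matrix.mulVecLin] using h2
  set c : BF n := fun α => if hα : α ∈ T then h ⟨α, hα⟩ else 0 with hc
  refine ⟨A c, ?_, ?_, ?_⟩
  · intro h0
    apply hh0
    have hc0 : c = 0 := by
      have h2 := anf_A c
      rw [h0] at h2
      rw [← h2]
      funext α
      simp [anf]
    funext α
    have h2 := congrFun hc0 α
    rw [hc] at h2
    simpa [α.2] using h2
  · apply degBF_le
    intro α hα
    rw [anf_A] at hα
    rw [hc] at hα
    by_cases hm : α ∈ T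
    · exact (Finset.mem_filter.mp hm).2
    · exact absurd (dif_neg hm) hα
  · intro x hx
    have heq : A c x = M.mulVec h ⟨x, hx⟩ := by
      rw [A]
      rw [Finset.sum_filter]
      rw [← Finset.sum_subset (Finset.subset_univ T) (by
        intro α _ hα
        rw [hc]
        simp [dif_neg hα])]
      rw [Matrix.mulVec, dotProduct]
      rw [← Finset.sum_attach T]
      apply Finset.sum_congr rfl
      intro α _
      rw [hc]
      simp only [α.2, dif_pos]
      rw [boole_mul]
    rw [heq, hker]
    rfl

lemma wtv_le (x : Fin n → ZMod 2) : wtv x ≤ n := by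
  rw [wtv]
  calc (Finset.univ.filter fun i => x i = 1).card ≤ (Finset.univ : Finset (Fin n)).card :=
        Finset.card_le_card (Finset.filter_subset _ _)
    _ = n := by simp

lemma wtv_compl (x : Fin n → ZMod 2) : wtv (compl x) = n - wtv x := by
  have h : (Finset.univ.filter fun i => compl x i = 1)
      = (Finset.univ.filter fun i => x i = 1)ᶜ := by
    ext i
    simp only [Finset.mem_filter, Finset.mem_univ, true_and, Finset.mem_compl]
    show x i + 1 = 1 ↔ ¬ x i = 1
    rcases zmod2_cases (x i) with hx | hx <;> rw [hx] <;> decide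
  rw [wtv, wtv, h, Finset.card_compl]
  simp

lemma wtv_indicator (d : ℕ) (hd : d ≤ n) :
    wtv (fun i : Fin n => if i.1 < d then (1 : ZMod 2) else 0) = d := by
  rw [wtv]
  have h : (Finset.univ.filter fun i : Fin n =>
      (if i.1 < d then (1 : ZMod 2) else 0) = 1) = Finset.univ.filter fun i : Fin n => i.1 < d := by
    ext i
    simp only [Finset.mem_filter, Finset.mem_univ, true_and]
    by_cases hi : i.1 < d <;> simp [hi]
  rw [h]
  have hcount : (Finset.univ.filter fun i : Fin n => i.1 < d).card = (Finset.range d).card := by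
    refine Finset.card_bij' (fun i _ => i.1)
      (fun j hj => ⟨j, lt_of_lt_of_le (Finset.mem_range.mp hj) hd⟩) ?_ ?_ ?_ ?_
    · intro i hi
      exact Finset.mem_range.mpr (Finset.mem_filter.mp hi).2
    · intro j hj
      exact Finset.mem_filter.mpr ⟨Finset.mem_univ _, Finset.mem_range.mp hj⟩
    · intro i _; rfl
    · intro j _; rfl
  rw [hcount, Finset.card_range]

lemma card_low (hn : 1 ≤ n) :
    2 ^ (n - 1) < (Finset.univ.filter fun α : Fin n → ZMod 2 => wtv α ≤ (n+1)/2).card := by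
  set d := (n+1)/2 with hd
  have hdn : d ≤ n := by omega
  set T := Finset.univ.filter fun α : Fin n → ZMod 2 => wtv α ≤ d with hT
  set U := Finset.univ.filter fun α : Fin n → ZMod 2 => ¬ wtv α ≤ d with hU
  have hTU : T.card + U.card = 2 ^ n := by
    rw [hT, hU, Finset.card_filter_add_card_filter_not]
    rw [Finset.card_univ]
    rw [Fintype.card_fun]
    simp
  set V := Finset.univ.filter fun α : Fin n → ZMod 2 => wtv α + d < n with hV
  have hUV : U.card = V.card := by
    refine Finset.card_bij' (fun x _ => compl x) (fun x _ => compl x) ?_ ?_ ?_ ?_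
    · intro x hx
      rw [hU] at hx
      have h1 := (Finset.mem_filter.mp hx).2
      rw [hV]
      refine Finset.mem_filter.mpr ⟨Finset.mem_univ _, ?_⟩
      rw [wtv_compl]
      have := wtv_le x
      omega
    · intro x hx
      rw [hV] at hx
      have h2 := (Finset.mem_filter.mp hx).2
      rw [hU]
      refine Finset.mem_filter.mpr ⟨Finset.mem_univ _, ?_⟩
      rw [wtv_compl]
      have := wtv_le x
      omega
    · intro x _; exact compl_compl x
    · intro x _; exact compl_compl x
  have hVT : V ⊂ T := by
    constructor
    · intro x hx
      rw [hV] at hx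
      rw [hT]
      refine Finset.mem_filter.mpr ⟨Finset.mem_univ _, ?_⟩
      have := (Finset.mem_filter.mp hx).2
      omega
    · intro hsub
      have hx0 : (fun i : Fin n => if i.1 < d then (1 : ZMod 2) else 0) ∈ T := by
        rw [hT]
        refine Finset.mem_filter.mpr ⟨Finset.mem_univ _, ?_⟩
        rw [wtv_indicator d hdn]
      have h3 := hsub hx0
      rw [hV] at h3
      have h4 := (Finset.mem_filter.mp h3).2
      rw [wtv_indicator d hdn] at h4
      omega
  have hlt : V.card < T.card := Finset.card_lt_card hVT
  have h2 : 2 ^ n = 2 * 2 ^ (n - 1) := by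
    rw [← pow_succ']
    congr 1
    omega
  omega

/-- Upper bound: for any f there is a member of the AI set that is at most (n+1)/2. -/
lemma upper_mem (hn : 1 ≤ n) (f : BF n) :
    ∃ m : ℕ, m ∈ {d : ℕ | ∃ g : BF n, g ≠ 0 ∧ degBF g = d ∧
      ((∀ x, g x * f x = 0) ∨ (∀ x, g x * (1 + f x) = 0))} ∧ m ≤ (n+1)/2 := by
  classical
  set d := (n+1)/2 with hd
  set S₁ := Finset.univ.filter fun x : Fin n → ZMod 2 => f x = 1 with hS₁
  set S₀ := Finset.univ.filter fun x : Fin n → ZMod 2 => f x = 0 with hS₀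
  have hsum : S₁.card + S₀.card = 2 ^ n := by
    rw [hS₁, hS₀]
    rw [show (Finset.univ.filter fun x : Fin n → ZMod 2 => f x = 0)
        = Finset.univ.filter fun x : Fin n → ZMod 2 => ¬ f x = 1 by
      apply Finset.filter_congr
      intro x _
      rcases zmod2_cases (f x) with h | h <;> rw [h] <;> decide]
    rw [Finset.card_filter_add_card_filter_not, Finset.card_univ, Fintype.card_fun]
    simp
  have hlow := card_low hn
  have h2 : 2 ^ n = 2 * 2 ^ (n - 1) := by
    rw [← pow_succ']
    congr 1
    omega
  by_cases hS : S₁.card ≤ 2 ^ (n - 1)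
  · obtain ⟨g, hg0, hgd, hgv⟩ := exists_annih S₁ d (lt_of_le_of_lt hS hlow)
    refine ⟨degBF g, ⟨g, hg0, rfl, Or.inl fun x => ?_⟩, hgd⟩
    rcases zmod2_cases (f x) with h | h
    · rw [h, mul_zero]
    · rw [hgv x (Finset.mem_filter.mpr ⟨Finset.mem_univ _, h⟩), zero_mul]
  · have hS0 : S₀.card < (Finset.univ.filter fun α : Fin n → ZMod 2 => wtv α ≤ d).card := by
      have : S₀.card ≤ 2 ^ (n - 1) := by omega
      exact lt_of_le_of_lt this hlow
    obtain ⟨g, hg0, hgd, hgv⟩ := exists_annih S₀ d hS0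
    refine ⟨degBF g, ⟨g, hg0, rfl, Or.inr fun x => ?_⟩, hgd⟩
    rcases zmod2_cases (f x) with h | h
    · rw [hgv x (Finset.mem_filter.mpr ⟨Finset.mem_univ _, h⟩), zero_mul]
    · rw [h, show (1 : ZMod 2) + 1 = 0 by decide, mul_zero]

end AIM

open AIM in
/-- Maj_n has algebraic immunity exactly ⌈n/2⌉, the maximum possible value. -/
theorem AI_maj (n : ℕ) (hn : 1 ≤ n) :
    AI (majF n) = (n + 1) / 2 ∧ ∀ f : BF n, AI f ≤ (n + 1) / 2 := by
  have upper : ∀ f : BF n, AI f ≤ (n + 1) / 2 := by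
    intro f
    obtain ⟨m, hm, hle⟩ := upper_mem hn f
    exact le_trans (Nat.sInf_le hm) hle
  refine ⟨?_, upper⟩
  refine le_antisymm (upper _) ?_
  obtain ⟨m, hm, _⟩ := upper_mem hn (majF n)
  have hmem := Nat.sInf_mem (⟨m, hm⟩ : Set.Nonempty _)
  obtain ⟨g, hg0, hdeg, hor⟩ := hmem
  rw [show sInf {d : ℕ | ∃ g : BF n, g ≠ 0 ∧ degBF g = d ∧
    ((∀ x, g x * majF n x = 0) ∨ (∀ x, g x * (1 + majF n x) = 0))} = AI (majF n) from rfl]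
    at hdeg
  rcases hor with hann | hann
  · -- g annihilates majF: g vanishes on high weight
    set g' : BF n := fun x => g (compl x) with hg'
    have hg'0 : g' ≠ 0 := by
      intro h0
      apply hg0
      funext x
      have h1 := congrFun h0 (compl x)
      simpa [hg', compl_compl] using h1
    have hvan : ∀ x, wtv x ≤ (n + 1) / 2 - 1 → g' x = 0 := by
      intro x hx
      have hw := wtv_le x
      have hmaj : majF n (compl x) = 1 := by
        rw [majF]
        rw [if_pos]
        rw [wtv_compl]
        omega
      have := hann (compl x)
      rw [hmaj, mul_one] at this
      exact this
    have h1 : (n + 1) / 2 - 1 + 1 ≤ degBF g' := vanish_low hvan hg'0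
    have h2 : degBF g' ≤ degBF g := deg_comp_compl g
    omega
  · -- g annihilates 1 + majF: g vanishes on low weight
    have hvan : ∀ x, wtv x ≤ n / 2 → g x = 0 := by
      intro x hx
      have hmaj : majF n x = 0 := by
        rw [majF, if_neg]
        omega
      have := hann x
      rw [hmaj] at this
      rw [show (1 : ZMod 2) + 0 = 1 by decide, mul_one] at this
      exact this
    have h1 : n / 2 + 1 ≤ degBF g := vanish_low hvan hg0
    omega
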